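/- Under the stated smoothness assumptions on ξ, suppose additionally that ‖∇ξ(q)‖ is constant in q. Then ∇²ξ(q)∇ξ(q) = 0 for every q ∈ ℝ^d, and consequently, for any continuously differentiable a : ℝ → ℝ and κ > 0, the divergence of D(q) := κ(I_d + (a(ξ(q)) − 1)P(q)) simplifies to div D(q) = κ ( (a(ξ(q)) − 1) Δξ(q)/‖∇ξ(q)‖² + a'(ξ(q)) ) ∇ξ(q). -/

import Mathlib

open Matrix BigOperators

/-- Partial derivative `∂_j f (q)` of a scalar field on `ℝ^d`. -/
noncomputable def pdrv {d : ℕ} (j : Fin d) (f : (Fin d → ℝ) → ℝ) (q : Fin d → ℝ) : ℝ :=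
  fderiv ℝ f q (Pi.single j 1)

/-- Gradient `∇f(q)` of a scalar field on `ℝ^d`. -/
noncomputable def gradv {d : ℕ} (f : (Fin d → ℝ) → ℝ) (q : Fin d → ℝ) : Fin d → ℝ :=
  fun j => pdrv j f q

/-- Hessian matrix `∇²f(q)`, with entries `(i,j) ↦ ∂_j ∂_i f(q)`. -/
noncomputable def hessM {d : ℕ} (f : (Fin d → ℝ) → ℝ) (q : Fin d → ℝ) :
    Matrix (Fin d) (Fin d) ℝ :=
  Matrix.of fun i j => pdrv j (fun q' => pdrv i f q') q

/-- Laplacian `Δf(q)`. -/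
noncomputable def lapl {d : ℕ} (f : (Fin d → ℝ) → ℝ) (q : Fin d → ℝ) : ℝ :=
  ∑ i, hessM f q i i

/-- Divergence of a matrix field, `(div M)_i = ∑_j ∂_j M_{ij}`. -/
noncomputable def divMat {d : ℕ} (M : (Fin d → ℝ) → Matrix (Fin d) (Fin d) ℝ)
    (q : Fin d → ℝ) : Fin d → ℝ :=
  fun i => ∑ j, pdrv j (fun q' => M q' i j) q

/-- The projection field `P(q) = ∇ξ(q) ⊗ ∇ξ(q)/‖∇ξ(q)‖²`. -/
noncomputable def projP {d : ℕ} (ξ : (Fin d → ℝ) → ℝ) (q : Fin d → ℝ) :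
    Matrix (Fin d) (Fin d) ℝ :=
  Matrix.of fun i j => gradv ξ q i * gradv ξ q j / (∑ k, gradv ξ q k ^ 2)

section helpers

variable {d : ℕ}

lemma pdrv_congr {f g : (Fin d → ℝ) → ℝ} (h : ∀ x, f x = g x) (j : Fin d) (q : Fin d → ℝ) :
    pdrv j f q = pdrv j g q := by
  rw [show f = g from funext h]

lemma contDiff_pdrv {ξ : (Fin d → ℝ) → ℝ} (hξ : ContDiff ℝ 2 ξ) (i : Fin d) :
    ContDiff ℝ 1 (fun q => pdrv i ξ q) := by
  have h1 : ContDiff ℝ 1 (fderiv ℝ ξ) := hξ.fderiv_right (by norm_num : (1:WithTop ℕ∞) + 1 ≤ 2)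
  exact ((ContinuousLinearMap.apply ℝ ℝ (Pi.single i 1 : Fin d → ℝ)).contDiff).comp h1

lemma pdrv_pdrv {ξ : (Fin d → ℝ) → ℝ} (hξ : ContDiff ℝ 2 ξ) (i j : Fin d) (q : Fin d → ℝ) :
    pdrv j (fun q' => pdrv i ξ q') q
      = fderiv ℝ (fderiv ℝ ξ) q (Pi.single j 1) (Pi.single i 1) := by
  have h1 : DifferentiableAt ℝ (fderiv ℝ ξ) q :=
    ((hξ.fderiv_right (by norm_num : (1:WithTop ℕ∞) + 1 ≤ 2)).differentiable (by norm_num)) q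
  have h := ((ContinuousLinearMap.apply ℝ ℝ
      (Pi.single i 1 : Fin d → ℝ)).hasFDerivAt.comp q h1.hasFDerivAt).fderiv
  simp only [pdrv]
  rw [show (fun q' => fderiv ℝ ξ q' (Pi.single i 1)) =
      (ContinuousLinearMap.apply ℝ ℝ (Pi.single i 1 : Fin d → ℝ)) ∘ (fderiv ℝ ξ) from rfl, h]
  rfl

lemma pdrv_symm {ξ : (Fin d → ℝ) → ℝ} (hξ : ContDiff ℝ 2 ξ) (i j : Fin d) (q : Fin d → ℝ) :
    pdrv j (fun q' => pdrv i ξ q') q = pdrv i (fun q' => pdrv j ξ q') q := by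
  rw [pdrv_pdrv hξ, pdrv_pdrv hξ]
  exact hξ.contDiffAt.isSymmSndFDerivAt (by norm_num) _ _

lemma pdrv_mul {f g : (Fin d → ℝ) → ℝ} {q : Fin d → ℝ}
    (hf : DifferentiableAt ℝ f q) (hg : DifferentiableAt ℝ g q) (j : Fin d) :
    pdrv j (fun q' => f q' * g q') q = f q * pdrv j g q + g q * pdrv j f q := by
  simp only [pdrv]
  rw [fderiv_fun_mul hf hg]
  simp [smul_eq_mul]

lemma pdrv_sum {f : Fin d → (Fin d → ℝ) → ℝ} {q : Fin d → ℝ}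
    (hf : ∀ k, DifferentiableAt ℝ (f k) q) (j : Fin d) :
    pdrv j (fun q' => ∑ k, f k q') q = ∑ k, pdrv j (f k) q := by
  simp only [pdrv]
  rw [fderiv_fun_sum fun k _ => hf k]
  simp

lemma pdrv_comp {a : ℝ → ℝ} {ξ : (Fin d → ℝ) → ℝ} {q : Fin d → ℝ}
    (ha : DifferentiableAt ℝ a (ξ q)) (hξ : DifferentiableAt ℝ ξ q) (j : Fin d) :
    pdrv j (fun q' => a (ξ q')) q = deriv a (ξ q) * pdrv j ξ q := by
  simp only [pdrv]
  rw [show (fun q' => a (ξ q')) = a ∘ ξ from rfl, fderiv_comp q ha hξ]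
  simp only [ContinuousLinearMap.comp_apply]
  rw [show fderiv ℝ ξ q (Pi.single j 1) = (fderiv ℝ ξ q (Pi.single j 1)) • (1:ℝ) by simp,
    (fderiv ℝ a (ξ q)).map_smul]
  simp [fderiv_apply_one_eq_deriv, mul_comm]

end helpers

/-- If `‖∇ξ‖` is constant then `∇²ξ∇ξ = 0`, and the divergence of
`D = κ(I + (a(ξ)−1)P)` simplifies to
`div D = κ((a(ξ)−1)Δξ/‖∇ξ‖² + a'(ξ))∇ξ`. -/
theorem div_diffusion_constant_gradient_norm (d : ℕ) (ξ : (Fin d → ℝ) → ℝ)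
    (hξ : ContDiff ℝ 2 ξ) (hgrad : ∀ q, gradv ξ q ≠ 0)
    (hconst : ∃ c : ℝ, ∀ q, (∑ k, gradv ξ q k ^ 2) = c)
    (a : ℝ → ℝ) (ha : ContDiff ℝ 1 a) (κ : ℝ) (hκ : 0 < κ) (q : Fin d → ℝ) :
    hessM ξ q *ᵥ gradv ξ q = 0 ∧
    ∀ i, divMat
        (fun q' => κ • ((1 : Matrix (Fin d) (Fin d) ℝ) + (a (ξ q') - 1) • projP ξ q')) q i
      = κ * ((a (ξ q) - 1) * lapl ξ q / (∑ k, gradv ξ q k ^ 2) + deriv a (ξ q))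
          * gradv ξ q i := by
  obtain ⟨c, hc⟩ := hconst
  have hc' : ∀ x, (∑ k, pdrv k ξ x * pdrv k ξ x) = c := by
    intro x; simpa [gradv, pow_two] using hc x
  have hgd : ∀ k, Differentiable ℝ (fun p => pdrv k ξ p) :=
    fun k => (contDiff_pdrv hξ k).differentiable (by norm_num)
  have hξd : Differentiable ℝ ξ := hξ.differentiable (by norm_num)
  have had : Differentiable ℝ a := ha.differentiable (by norm_num)
  -- key : ∑_k g_k ∂_i g_k = 0
  have key : ∀ (p : Fin d → ℝ) (i : Fin d),
      ∑ k, pdrv k ξ p * pdrv i (fun q' => pdrv k ξ q') p = 0 := by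
    intro p i
    have hF : (fun x => ∑ k, pdrv k ξ x * pdrv k ξ x) = fun _ => c := funext hc'
    have h0 : pdrv i (fun x => ∑ k, pdrv k ξ x * pdrv k ξ x) p = 0 := by
      rw [hF]; simp [pdrv]
    rw [pdrv_sum (fun k => (show DifferentiableAt ℝ (fun x => pdrv k ξ x * pdrv k ξ x) p from ((hgd k).mul (hgd k)) p)) i] at h0
    have h1 : ∀ k, pdrv i (fun x => pdrv k ξ x * pdrv k ξ x) p
        = 2 * (pdrv k ξ p * pdrv i (fun q' => pdrv k ξ q') p) := by
      intro k
      rw [pdrv_mul ((hgd k) p) ((hgd k) p) i]; ring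
    rw [Finset.sum_congr rfl fun k _ => h1 k, ← Finset.mul_sum] at h0
    linarith
  have key2 : ∀ i : Fin d,
      ∑ k, pdrv k ξ q * pdrv k (fun q' => pdrv i ξ q') q = 0 := by
    intro i
    rw [Finset.sum_congr rfl fun k _ => by rw [pdrv_symm hξ i k q]]
    exact key q i
  have hcpos : c ≠ 0 := by
    have h := hgrad q
    obtain ⟨k, hk⟩ := Function.ne_iff.mp h
    have : 0 < ∑ j, gradv ξ q j ^ 2 := by
      apply Finset.sum_pos' (fun j _ => sq_nonneg _)
      refine ⟨k, Finset.mem_univ k, ?_⟩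
      have hk' : gradv ξ q k ≠ 0 := by simpa using hk
      positivity
    rw [hc q] at this; exact ne_of_gt this
  constructor
  · funext i
    simp only [Matrix.mulVec, dotProduct, hessM, Matrix.of_apply, gradv, Pi.zero_apply]
    rw [Finset.sum_congr rfl fun j _ => by rw [pdrv_symm hξ i j q, mul_comm]]
    exact key q i
  · intro i
    simp only [divMat]
    set g : Fin d → (Fin d → ℝ) → ℝ := fun k p => pdrv k ξ p with hg
    have hsum : ∀ j : Fin d, pdrv j (fun q' =>
        (κ • ((1 : Matrix (Fin d) (Fin d) ℝ) + (a (ξ q') - 1) • projP ξ q')) i j) q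
        = κ * ((deriv a (ξ q) * g i q * (g j q * g j q)
            + ((a (ξ q) - 1) * g i q * pdrv j (fun q' => g j q') q
               + (a (ξ q) - 1) * (g j q * pdrv j (fun q' => g i q') q))) / c) := by
      intro j
      have hrw : ∀ x : Fin d → ℝ,
          (κ • ((1 : Matrix (Fin d) (Fin d) ℝ) + (a (ξ x) - 1) • projP ξ x)) i j
          = κ * ((if i = j then (1:ℝ) else 0)
              + (a (ξ x) - 1) * ((g i x * g j x) / c)) := by
        intro x
        simp only [Matrix.smul_apply, Matrix.add_apply, Matrix.one_apply, Matrix.smul_apply,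
          projP, Matrix.of_apply, smul_eq_mul, gradv, hg]
        rw [show (∑ k, pdrv k ξ x ^ 2) = c from by simpa [pow_two] using hc' x]
      rw [pdrv_congr hrw j q]
      -- differentiability facts
      have hfd : DifferentiableAt ℝ (fun q' => a (ξ q') - 1) q :=
        (((had.comp hξd) q).sub_const 1)
      have hgg : DifferentiableAt ℝ (fun q' => g i q' * g j q') q :=
        ((hgd i).mul (hgd j)) q
      have hggc : DifferentiableAt ℝ (fun q' => (g i q' * g j q') / c) q := by
        simp only [div_eq_mul_inv]
        exact hgg.mul_const c⁻¹
      have hin : DifferentiableAt ℝ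
          (fun q' => (if i = j then (1:ℝ) else 0)
              + (a (ξ q') - 1) * ((g i q' * g j q') / c)) q :=
        (differentiableAt_const _).add (hfd.mul hggc)
      -- pull out κ
      have h1 : pdrv j (fun q' => κ * ((if i = j then (1:ℝ) else 0)
              + (a (ξ q') - 1) * ((g i q' * g j q') / c))) q
          = κ * pdrv j (fun q' => (if i = j then (1:ℝ) else 0)
              + (a (ξ q') - 1) * ((g i q' * g j q') / c)) q := by
        simp only [pdrv]
        rw [fderiv_const_mul hin κ]; simp
      rw [h1]
      have h2 : pdrv j (fun q' => (if i = j then (1:ℝ) else 0)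
              + (a (ξ q') - 1) * ((g i q' * g j q') / c)) q
          = pdrv j (fun q' => (a (ξ q') - 1) * ((g i q' * g j q') / c)) q := by
        simp only [pdrv]
        rw [fderiv_const_add]
      rw [h2, pdrv_mul hfd hggc j]
      have h3 : pdrv j (fun q' => (g i q' * g j q') / c) q
          = (pdrv j (fun q' => g i q' * g j q') q) / c := by
        simp only [pdrv, div_eq_mul_inv]
        rw [fderiv_mul_const hgg]
        simp [mul_comm]
      have h4 : pdrv j (fun q' => a (ξ q') - 1) q = deriv a (ξ q) * pdrv j ξ q := by
        simp only [pdrv]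
        rw [fderiv_sub_const]
        exact pdrv_comp (had (ξ q)) (hξd q) j
      rw [h3, pdrv_mul ((hgd i) q) ((hgd j) q) j, h4]
      have hgj : pdrv j ξ q = g j q := rfl
      rw [hgj]
      ring
    rw [Finset.sum_congr rfl fun j _ => hsum j]
    have e1 : ∑ j, g j q * g j q = c := hc' q
    have e2 : ∑ j, g j q * pdrv j (fun q' => g i q') q = 0 := key2 i
    have e3 : ∑ j, pdrv j (fun q' => g j q') q = lapl ξ q := by
      simp [lapl, hessM]; rfl
    have expand : ∑ j, κ * ((deriv a (ξ q) * g i q * (g j q * g j q)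
            + ((a (ξ q) - 1) * g i q * pdrv j (fun q' => g j q') q
               + (a (ξ q) - 1) * (g j q * pdrv j (fun q' => g i q') q))) / c)
        = κ * ((deriv a (ξ q) * g i q * c
            + ((a (ξ q) - 1) * g i q * lapl ξ q + (a (ξ q) - 1) * 0)) / c) := by
      rw [← Finset.mul_sum, ← Finset.sum_div, Finset.sum_add_distrib, Finset.sum_add_distrib,
        ← Finset.mul_sum, ← Finset.mul_sum, ← Finset.mul_sum, e1, e2, e3]
    rw [expand, hc q]
    have : gradv ξ q i = g i q := rfl
    rw [this]
    field_simp
    ring
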